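/- Ekeland-based violation lemma: Let F : ℝ^n → ℝ^d be continuously differentiable, Γ ⊆ ℝ^d closed, X = F^{-1}(Γ), and let x̄ ∈ X be such that MSCQ fails at x̄. Then there exist sequences x_k → x̄ with x_k ∉ X, ξ_k ∈ ∂(d_Γ ∘ F)(x_k) with ξ_k → 0, and a unit vector u ∈ ℝ^n such that (x_k − x̄)/‖x_k − x̄‖ → u, and for any choice y_k ∈ P_Γ(F(x_k)) one has (y_k − F(x̄))/‖x_k − x̄‖ → ∇F(x̄)u; in particular ∇F(x̄)u ∈ T_Γ(F(x̄)). -/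

import Mathlib

open Set Filter Topology Metric

noncomputable section

/-- The (Bouligand) tangent cone to `C` at `z`. -/
def tangentConeB {E : Type*} [NormedAddCommGroup E] [NormedSpace ℝ E]
    (C : Set E) (z : E) : Set E :=
  {d | ∃ (dk : ℕ → E) (tk : ℕ → ℝ), Tendsto dk atTop (𝓝 d) ∧
    Tendsto tk atTop (𝓝 0) ∧ (∀ k, 0 < tk k) ∧ ∀ k, z + tk k • dk k ∈ C}

/-- The regular (Fréchet) subdifferential of `f` at `x`. -/
def frechetSubdiff {E : Type*} [NormedAddCommGroup E] [InnerProductSpace ℝ E]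
    (f : E → ℝ) (x : E) : Set E :=
  {v | ∀ ε > (0 : ℝ), ∀ᶠ y in 𝓝 x, -(ε * ‖y - x‖) ≤ f y - f x - (inner ℝ v (y - x) : ℝ)}

/-- The limiting (Mordukhovich) subdifferential of `f` at `x`. -/
def limSubdiff {E : Type*} [NormedAddCommGroup E] [InnerProductSpace ℝ E]
    (f : E → ℝ) (x : E) : Set E :=
  {v | ∃ (xk vk : ℕ → E), Tendsto xk atTop (𝓝 x) ∧ Tendsto vk atTop (𝓝 v) ∧
    Tendsto (fun k => f (xk k)) atTop (𝓝 (f x)) ∧ ∀ k, vk k ∈ frechetSubdiff f (xk k)}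

set_option maxHeartbeats 1000000 in
lemma key_min {n : ℕ} (f : EuclideanSpace ℝ (Fin n) → ℝ) (hf : Continuous f)
    (hf0 : ∀ x, 0 ≤ f x) (z : EuclideanSpace ℝ (Fin n)) (R : ℝ) (hR : 0 < R)
    (hz : 0 < f z) :
    ∃ x ξ, dist x z < R ∧ f x ≤ 2 * f z ∧ ‖ξ‖ ≤ 2 * f z / R ∧
      ξ ∈ frechetSubdiff f x := by
  set σ : ℝ := 2 * f z / R with hσdef
  have hσ : 0 < σ := div_pos (by linarith) hR
  set δ : ℝ := R / 4 with hδdef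
  have hδ : 0 < δ := by positivity
  set h : EuclideanSpace ℝ (Fin n) → ℝ :=
    fun y => σ * Real.sqrt ((inner ℝ (y - z) (y - z) : ℝ) + δ ^ 2) with hhdef
  have hinner_eq : ∀ w : EuclideanSpace ℝ (Fin n), (inner ℝ w w : ℝ) = ‖w‖ ^ 2 :=
    fun w => real_inner_self_eq_norm_sq w
  have hpos : ∀ y : EuclideanSpace ℝ (Fin n), 0 < (inner ℝ (y - z) (y - z) : ℝ) + δ ^ 2 := by
    intro y; rw [hinner_eq]; positivity
  have hcont_h : Continuous h := by
    apply continuous_const.mul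
    apply Real.continuous_sqrt.comp
    exact ((continuous_id.sub continuous_const).inner (continuous_id.sub continuous_const)).add
      continuous_const
  obtain ⟨x, hxball, hmin⟩ := (isCompact_closedBall z R).exists_isMinOn
    ⟨z, mem_closedBall_self hR.le⟩ ((hf.add hcont_h).continuousOn)
  have hz0 : h z = σ * δ := by
    simp only [hhdef, sub_self, inner_zero_left, zero_add]
    rw [Real.sqrt_sq hδ.le]
  have hminz : f x + h x ≤ f z + σ * δ := by
    have h1 : f x + h x ≤ f z + h z := hmin (mem_closedBall_self hR.le)
    rw [hz0] at h1; exact h1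
  have hσδ : σ * δ = f z / 2 := by
    rw [hσdef, hδdef]; field_simp; ring
  have hlb : ∀ y : EuclideanSpace ℝ (Fin n), σ * dist y z ≤ h y := by
    intro y
    have h1 : Real.sqrt ((inner ℝ (y - z) (y - z) : ℝ)) ≤
        Real.sqrt ((inner ℝ (y - z) (y - z) : ℝ) + δ ^ 2) :=
      Real.sqrt_le_sqrt (by nlinarith [sq_nonneg δ])
    have h2 : dist y z = Real.sqrt ((inner ℝ (y - z) (y - z) : ℝ)) := by
      rw [hinner_eq, Real.sqrt_sq (norm_nonneg _), dist_eq_norm]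
    calc σ * dist y z = σ * Real.sqrt ((inner ℝ (y - z) (y - z) : ℝ)) := by rw [h2]
      _ ≤ σ * Real.sqrt ((inner ℝ (y - z) (y - z) : ℝ) + δ ^ 2) :=
        mul_le_mul_of_nonneg_left h1 hσ.le
      _ = h y := rfl
  have hhx : 0 ≤ h x := le_trans (by positivity) (hlb x)
  have hdistxz : dist x z < R := by
    by_contra hcon
    push_neg at hcon
    have h1 : σ * R ≤ σ * dist x z := mul_le_mul_of_nonneg_left hcon hσ.le
    have h2 : σ * R = 2 * f z := by rw [hσdef]; field_simp
    have h3 := hlb x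
    have h4 := hf0 x
    nlinarith
  have hfx2 : f x ≤ 2 * f z := by nlinarith
  set t₀ : ℝ := (inner ℝ (x - z) (x - z) : ℝ) + δ ^ 2 with ht₀def
  have ht₀ : 0 < t₀ := hpos x
  have hst₀ : 0 < Real.sqrt t₀ := Real.sqrt_pos.2 ht₀
  set c : ℝ := σ / Real.sqrt t₀ with hcdef
  set ξ : EuclideanSpace ℝ (Fin n) := -(c • (x - z)) with hξdef
  have hq : HasFDerivAt (fun y : EuclideanSpace ℝ (Fin n) =>
      (inner ℝ (y - z) (y - z) : ℝ) + δ ^ 2)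
      (((fderivInnerCLM ℝ (x - z, x - z)).comp
        ((ContinuousLinearMap.id ℝ _).prod (ContinuousLinearMap.id ℝ _)))) x := by
    have hid : HasFDerivAt (fun y : EuclideanSpace ℝ (Fin n) => y - z)
        (ContinuousLinearMap.id ℝ _) x := (hasFDerivAt_id x).sub_const z
    exact (hid.inner ℝ hid).add_const _
  have hsq : HasDerivAt Real.sqrt (1 / (2 * Real.sqrt t₀)) t₀ :=
    Real.hasDerivAt_sqrt ht₀.ne'
  have hh' : HasFDerivAt h
      (σ • ((1 / (2 * Real.sqrt t₀)) • (((fderivInnerCLM ℝ (x - z, x - z)).comp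
        ((ContinuousLinearMap.id ℝ _).prod (ContinuousLinearMap.id ℝ _)))))) x :=
    ((hsq.comp_hasFDerivAt x hq)).const_mul σ
  set L := (σ • ((1 / (2 * Real.sqrt t₀)) • (((fderivInnerCLM ℝ (x - z, x - z)).comp
        ((ContinuousLinearMap.id ℝ _).prod (ContinuousLinearMap.id ℝ _)))))) with hLdef
  have hLeval : ∀ w : EuclideanSpace ℝ (Fin n), L w = c * (inner ℝ (x - z) w : ℝ) := by
    intro w
    simp only [hLdef, ContinuousLinearMap.smul_apply, ContinuousLinearMap.comp_apply,
      ContinuousLinearMap.prod_apply, ContinuousLinearMap.id_apply, fderivInnerCLM_apply,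
      smul_eq_mul]
    rw [real_inner_comm w (x - z), hcdef]
    field_simp
    ring
  have hξinner : ∀ w : EuclideanSpace ℝ (Fin n), (inner ℝ ξ w : ℝ) = -(L w) := by
    intro w
    rw [hLeval, hξdef]
    simp [inner_smul_left, real_inner_smul_left]
  have hξnorm : ‖ξ‖ ≤ σ := by
    rw [hξdef, norm_neg, norm_smul]
    have h1 : ‖x - z‖ ≤ Real.sqrt t₀ := by
      have h2 : ‖x - z‖ = Real.sqrt ((inner ℝ (x - z) (x - z) : ℝ)) := by
        rw [hinner_eq, Real.sqrt_sq (norm_nonneg _)]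
      rw [h2, ht₀def]
      exact Real.sqrt_le_sqrt (by nlinarith [sq_nonneg δ])
    have hc : ‖c‖ = σ / Real.sqrt t₀ := by
      rw [hcdef, Real.norm_eq_abs, abs_of_pos (div_pos hσ hst₀)]
    rw [hc, div_mul_eq_mul_div, div_le_iff₀ hst₀]
    nlinarith [hσ.le]
  refine ⟨x, ξ, hdistxz, hfx2, hξnorm, ?_⟩
  intro ε hε
  have hev1 : ∀ᶠ y in 𝓝 x, ‖h y - h x - L (y - x)‖ ≤ ε * ‖y - x‖ := by
    have h5 := hh'.isLittleO
    exact (Asymptotics.isLittleO_iff.1 h5) hε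
  have hev2 : ∀ᶠ y in 𝓝 x, y ∈ Metric.ball z R :=
    Metric.isOpen_ball.eventually_mem (by simpa using hdistxz)
  filter_upwards [hev1, hev2] with y hy1 hy2
  have hmy : f x + h x ≤ f y + h y := hmin (Metric.ball_subset_closedBall hy2)
  rw [hξinner]
  have h6 : h y - h x - L (y - x) ≤ ε * ‖y - x‖ :=
    (abs_le.1 (by rwa [Real.norm_eq_abs] at hy1)).2
  linarith

set_option maxHeartbeats 1000000 in
theorem stmt18 {n d : ℕ}
    (F : EuclideanSpace ℝ (Fin n) → EuclideanSpace ℝ (Fin d))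
    (hF : ContDiff ℝ 1 F)
    (Γ : Set (EuclideanSpace ℝ (Fin d))) (hΓ : IsClosed Γ)
    (xbar : EuclideanSpace ℝ (Fin n)) (hxbar : F xbar ∈ Γ)
    -- MSCQ fails at `x̄`
    (hMSCQ : ¬ ∃ U ∈ 𝓝 xbar, ∃ κ > (0 : ℝ), ∀ x ∈ U,
        Metric.infDist x (F ⁻¹' Γ) ≤ κ * Metric.infDist (F x) Γ) :
    ∃ (xk ξk : ℕ → EuclideanSpace ℝ (Fin n)) (u : EuclideanSpace ℝ (Fin n)),
      ‖u‖ = 1 ∧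
      Tendsto xk atTop (𝓝 xbar) ∧
      (∀ k, xk k ∉ F ⁻¹' Γ) ∧
      (∀ k, ξk k ∈ limSubdiff (fun x => Metric.infDist (F x) Γ) (xk k)) ∧
      Tendsto ξk atTop (𝓝 0) ∧
      Tendsto (fun k => ‖xk k - xbar‖⁻¹ • (xk k - xbar)) atTop (𝓝 u) ∧
      (∀ yk : ℕ → EuclideanSpace ℝ (Fin d),
        (∀ k, yk k ∈ Γ ∧ dist (F (xk k)) (yk k) = Metric.infDist (F (xk k)) Γ) →
        Tendsto (fun k => ‖xk k - xbar‖⁻¹ • (yk k - F xbar)) atTop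
          (𝓝 (fderiv ℝ F xbar u))) ∧
      fderiv ℝ F xbar u ∈ tangentConeB Γ (F xbar) := by
  have hΓne : Γ.Nonempty := ⟨F xbar, hxbar⟩
  set f : EuclideanSpace ℝ (Fin n) → ℝ := fun x => infDist (F x) Γ with hfdef
  have hfc : Continuous f := (continuous_infDist_pt Γ).comp hF.continuous
  have hf0 : ∀ x, 0 ≤ f x := fun x => infDist_nonneg
  have haux : ∀ C : ℝ, Tendsto (fun k : ℕ => C / ((k : ℝ) + 1)) atTop (𝓝 0) := by
    intro C
    simpa [div_eq_mul_inv] using tendsto_one_div_add_atTop_nhds_zero_nat.const_mul C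
  push_neg at hMSCQ
  have hzex : ∀ k : ℕ, ∃ zz, dist zz xbar < 1 / ((k : ℝ) + 1) ∧
      ((k : ℝ) + 1) * f zz < infDist zz (F ⁻¹' Γ) := by
    intro k
    have hball : Metric.ball xbar (1 / ((k : ℝ) + 1)) ∈ 𝓝 xbar :=
      Metric.ball_mem_nhds _ (by positivity)
    obtain ⟨zz, hz1, hz2⟩ := hMSCQ _ hball ((k : ℝ) + 1) (by positivity)
    exact ⟨zz, by simpa [Metric.mem_ball] using hz1, hz2⟩
  choose z hzb hzlt using hzex
  have hrpos : ∀ k, 0 < infDist (z k) (F ⁻¹' Γ) := by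
    intro k
    have h1 : (0 : ℝ) ≤ ((k : ℝ) + 1) * f (z k) := mul_nonneg (by positivity) (hf0 (z k))
    linarith [hzlt k]
  have hfzpos : ∀ k, 0 < f (z k) := by
    intro k
    rcases lt_or_eq_of_le (hf0 (z k)) with h | h
    · exact h
    · exfalso
      have hFz : F (z k) ∈ Γ := (hΓ.mem_iff_infDist_zero hΓne).2 h.symm
      have : infDist (z k) (F ⁻¹' Γ) = 0 := infDist_zero_of_mem hFz
      linarith [hrpos k]
  have hrle : ∀ k, infDist (z k) (F ⁻¹' Γ) ≤ dist (z k) xbar := fun k =>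
    infDist_le_dist_of_mem hxbar
  have hkey : ∀ k : ℕ, ∃ x ξ, dist x (z k) < infDist (z k) (F ⁻¹' Γ) / 2 ∧
      f x ≤ 2 * f (z k) ∧ ‖ξ‖ ≤ 2 * f (z k) / (infDist (z k) (F ⁻¹' Γ) / 2) ∧
      ξ ∈ frechetSubdiff f x := fun k =>
    key_min f hfc hf0 (z k) _ (by linarith [hrpos k]) (hfzpos k)
  choose x ξ hxz hfx hξn hξf using hkey
  have hxinf : ∀ k, infDist (z k) (F ⁻¹' Γ) / 2 ≤ infDist (x k) (F ⁻¹' Γ) := by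
    intro k
    have h1 : infDist (z k) (F ⁻¹' Γ) ≤ infDist (x k) (F ⁻¹' Γ) + dist (z k) (x k) :=
      infDist_le_infDist_add_dist
    have h2 : dist (z k) (x k) = dist (x k) (z k) := dist_comm _ _
    linarith [hxz k]
  have hxnX : ∀ k, x k ∉ F ⁻¹' Γ := by
    intro k hmem
    have : infDist (x k) (F ⁻¹' Γ) = 0 := infDist_zero_of_mem hmem
    linarith [hxinf k, hrpos k]
  have hdx : ∀ k, dist (x k) xbar < 2 / ((k : ℝ) + 1) := by
    intro k
    have h1 : dist (x k) xbar ≤ dist (x k) (z k) + dist (z k) xbar := dist_triangle _ _ _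
    have h2 := hxz k
    have h3 := hrle k
    have h4 := hzb k
    have h5 : 2 / ((k : ℝ) + 1) = 1 / ((k : ℝ) + 1) + 1 / ((k : ℝ) + 1) := by ring
    have h6 : (0 : ℝ) < 1 / ((k : ℝ) + 1) := by positivity
    linarith
  have htendx : Tendsto x atTop (𝓝 xbar) := by
    rw [tendsto_iff_dist_tendsto_zero]
    exact squeeze_zero (fun k => dist_nonneg) (fun k => (hdx k).le) (haux 2)
  have hxne : ∀ k, x k ≠ xbar := by
    intro k h
    exact hxnX k (h ▸ hxbar)
  have htpos : ∀ k, 0 < ‖x k - xbar‖ := fun k => norm_pos_iff.2 (sub_ne_zero.2 (hxne k))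
  have htk_ge : ∀ k, infDist (z k) (F ⁻¹' Γ) / 2 ≤ ‖x k - xbar‖ := by
    intro k
    have h1 : infDist (x k) (F ⁻¹' Γ) ≤ dist (x k) xbar := infDist_le_dist_of_mem hxbar
    rw [dist_eq_norm] at h1
    linarith [hxinf k]
  have hfxk : ∀ k, f (x k) ≤ 4 / ((k : ℝ) + 1) * ‖x k - xbar‖ := by
    intro k
    have hK : (0 : ℝ) < (k : ℝ) + 1 := by positivity
    have h1 : f (z k) < infDist (z k) (F ⁻¹' Γ) / ((k : ℝ) + 1) := by
      rw [lt_div_iff₀ hK]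
      linarith [hzlt k]
    have h2 := htk_ge k
    have h3 := hfx k
    have h4 : 4 / ((k : ℝ) + 1) * (infDist (z k) (F ⁻¹' Γ) / 2) ≤
        4 / ((k : ℝ) + 1) * ‖x k - xbar‖ :=
      mul_le_mul_of_nonneg_left h2 (by positivity)
    have h5 : 4 / ((k : ℝ) + 1) * (infDist (z k) (F ⁻¹' Γ) / 2) =
        2 * (infDist (z k) (F ⁻¹' Γ) / ((k : ℝ) + 1)) := by
      field_simp
      ring
    linarith
  have hξb : ∀ k, ‖ξ k‖ ≤ 4 / ((k : ℝ) + 1) := by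
    intro k
    have hK : (0 : ℝ) < (k : ℝ) + 1 := by positivity
    have hr := hrpos k
    have h1 : 2 * f (z k) / (infDist (z k) (F ⁻¹' Γ) / 2) ≤ 4 / ((k : ℝ) + 1) := by
      rw [div_le_div_iff₀ (by linarith) hK]
      nlinarith [hzlt k, (hfzpos k).le]
    linarith [hξn k]
  have hlim : ∀ k, ξ k ∈ limSubdiff f (x k) := fun k =>
    ⟨fun _ => x k, fun _ => ξ k, tendsto_const_nhds, tendsto_const_nhds,
      tendsto_const_nhds, fun _ => hξf k⟩
  set w : ℕ → EuclideanSpace ℝ (Fin n) := fun k => ‖x k - xbar‖⁻¹ • (x k - xbar) with hwdef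
  have hwsph : ∀ k, w k ∈ Metric.sphere (0 : EuclideanSpace ℝ (Fin n)) 1 := by
    intro k
    rw [mem_sphere_zero_iff_norm, hwdef, norm_smul, norm_inv, norm_norm,
      inv_mul_cancel₀ (htpos k).ne']
  obtain ⟨u, husph, φ, hφ, hwu⟩ :=
    (isCompact_sphere (0 : EuclideanSpace ℝ (Fin n)) 1).tendsto_subseq hwsph
  have hu : ‖u‖ = 1 := mem_sphere_zero_iff_norm.1 husph
  set A := fderiv ℝ F xbar with hAdef
  have hFd : HasFDerivAt F A xbar := (hF.differentiable one_ne_zero xbar).hasFDerivAt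
  have htendxk : Tendsto (x ∘ φ) atTop (𝓝 xbar) := htendx.comp hφ.tendsto_atTop
  have hbound : ∀ C : ℝ, 0 ≤ C → ∀ k : ℕ, C / ((φ k : ℝ) + 1) ≤ C / ((k : ℝ) + 1) := by
    intro C hC k
    apply div_le_div_of_nonneg_left hC (by positivity)
    have : (k : ℝ) ≤ (φ k : ℝ) := by exact_mod_cast hφ.le_apply
    linarith
  -- the projection convergence
  have hproj : ∀ yk : ℕ → EuclideanSpace ℝ (Fin d),
      (∀ k, yk k ∈ Γ ∧ dist (F ((x ∘ φ) k)) (yk k) = infDist (F ((x ∘ φ) k)) Γ) →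
      Tendsto (fun k => ‖(x ∘ φ) k - xbar‖⁻¹ • (yk k - F xbar)) atTop (𝓝 (A u)) := by
    intro yk hyk
    have hdecomp : (fun k => ‖(x ∘ φ) k - xbar‖⁻¹ • (yk k - F xbar)) =
        (fun k => ‖x (φ k) - xbar‖⁻¹ • (yk k - F (x (φ k)))) +
        (fun k => ‖x (φ k) - xbar‖⁻¹ • (F (x (φ k)) - F xbar)) := by
      funext k
      simp only [Pi.add_apply, Function.comp_apply, ← smul_add, sub_add_sub_cancel]
    rw [hdecomp]
    have hT1 : Tendsto (fun k => ‖x (φ k) - xbar‖⁻¹ • (yk k - F (x (φ k)))) atTop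
        (𝓝 0) := by
      apply squeeze_zero_norm (a := fun k : ℕ => 4 / ((k : ℝ) + 1)) _ (haux 4)
      intro k
      have ht := htpos (φ k)
      rw [norm_smul, norm_inv, norm_norm]
      have h1 : ‖yk k - F (x (φ k))‖ = f (x (φ k)) := by
        have h0 := (hyk k).2
        simp only [Function.comp_apply] at h0
        show ‖yk k - F (x (φ k))‖ = infDist (F (x (φ k))) Γ
        rw [← h0, dist_eq_norm]
        exact norm_sub_rev _ _
      rw [h1]
      have h2 := hfxk (φ k)
      have h3 : ‖x (φ k) - xbar‖⁻¹ * f (x (φ k)) ≤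
          ‖x (φ k) - xbar‖⁻¹ * (4 / ((φ k : ℝ) + 1) * ‖x (φ k) - xbar‖) :=
        mul_le_mul_of_nonneg_left h2 (by positivity)
      have h4 : ‖x (φ k) - xbar‖⁻¹ * (4 / ((φ k : ℝ) + 1) * ‖x (φ k) - xbar‖) =
          4 / ((φ k : ℝ) + 1) := by
        field_simp
      rw [h4] at h3
      exact h3.trans (hbound 4 (by norm_num) k)
    have hT2a : Tendsto (fun k => ‖x (φ k) - xbar‖⁻¹ •
        (F (x (φ k)) - F xbar - A (x (φ k) - xbar))) atTop (𝓝 0) := by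
      rw [NormedAddCommGroup.tendsto_nhds_zero]
      intro ε hε
      have hev : ∀ᶠ y in 𝓝 xbar, ‖F y - F xbar - A (y - xbar)‖ ≤ ε / 2 * ‖y - xbar‖ :=
        (Asymptotics.isLittleO_iff.1 hFd.isLittleO) (half_pos hε)
      filter_upwards [htendxk.eventually hev] with k hk
      have ht := htpos (φ k)
      rw [norm_smul, norm_inv, norm_norm]
      calc ‖x (φ k) - xbar‖⁻¹ * ‖F (x (φ k)) - F xbar - A (x (φ k) - xbar)‖
          ≤ ‖x (φ k) - xbar‖⁻¹ * (ε / 2 * ‖x (φ k) - xbar‖) :=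
            mul_le_mul_of_nonneg_left hk (by positivity)
        _ = ε / 2 := by field_simp
        _ < ε := by linarith
    have hT2b : Tendsto (fun k => A (w (φ k))) atTop (𝓝 (A u)) :=
      (A.continuous.tendsto u).comp hwu
    have hT2 : Tendsto (fun k => ‖x (φ k) - xbar‖⁻¹ • (F (x (φ k)) - F xbar)) atTop
        (𝓝 (A u)) := by
      have heq : (fun k => ‖x (φ k) - xbar‖⁻¹ • (F (x (φ k)) - F xbar)) =
          (fun k => ‖x (φ k) - xbar‖⁻¹ •
            (F (x (φ k)) - F xbar - A (x (φ k) - xbar)) + A (w (φ k))) := by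
        funext k
        simp only [hwdef, map_smul, ← smul_add, sub_add_cancel]
      rw [heq]
      simpa using hT2a.add hT2b
    simpa [Pi.add_def] using hT1.add hT2
  -- tangent cone membership
  have htangent : A u ∈ tangentConeB Γ (F xbar) := by
    have hyex : ∀ k : ℕ, ∃ y ∈ Γ, infDist (F (x (φ k))) Γ = dist (F (x (φ k))) y :=
      fun k => hΓ.exists_infDist_eq_dist hΓne _
    choose y hyΓ hyd using hyex
    have hdtend := hproj y (fun k => ⟨hyΓ k, (hyd k).symm⟩)
    refine ⟨fun k => ‖(x ∘ φ) k - xbar‖⁻¹ • (y k - F xbar), fun k => ‖x (φ k) - xbar‖,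
      hdtend, ?_, fun k => htpos (φ k), ?_⟩
    · have := tendsto_iff_dist_tendsto_zero.1 htendxk
      simpa [Function.comp, dist_eq_norm] using this
    · intro k
      simp only [Function.comp_apply]
      rw [smul_inv_smul₀ (htpos (φ k)).ne']
      simpa using hyΓ k
  exact ⟨x ∘ φ, ξ ∘ φ, u, hu, htendxk, fun k => hxnX (φ k), fun k => hlim (φ k),
    squeeze_zero_norm (fun k => (hξb (φ k)).trans (hbound 4 (by norm_num) k)) (haux 4),
    hwu, hproj, htangent⟩
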